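/- With the hypotheses of the previous result, assume additionally α, β ≥ 0 are such that (c₂W₀)^α ≤ D₀ ≤ (c₁W₀)^β and (c₂W₁)^α ≤ D₁ ≤ (c₁W₁)^β, where c₁ ≤ c₂ are the multiplicative growth constants satisfying c₁^{s_{k+1}} Wₖ^{s_{k+1}} W_{k-1} ≤ W_{k+1} ≤ c₂^{s_{k+1}} Wₖ^{s_{k+1}} W_{k-1}. Then (c₂Wₖ)^α ≤ Dₖ ≤ (c₁Wₖ)^β for all k ≥ 0, and hence the exponent δ with Dₖ ≍ Wₖ^δ satisfies α ≤ δ ≤ β. -/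
import Mathlib


open Filter

private lemma key_alg (c u v : ℝ) (hc : 0 ≤ c) (hu : 0 ≤ u) (hv : 0 ≤ v)
    (n : ℕ) (γ : ℝ) :
    (c * (c ^ n * u ^ n * v)) ^ γ = ((c * u) ^ γ) ^ n * (c * v) ^ γ := by
  have h1 : c * (c ^ n * u ^ n * v) = (c * u) ^ n * (c * v) := by ring
  rw [h1, Real.mul_rpow (by positivity) (by positivity),
    ← Real.rpow_natCast (c * u) n, ← Real.rpow_natCast ((c * u) ^ γ) n,
    ← Real.rpow_mul (by positivity), ← Real.rpow_mul (by positivity),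
    mul_comm γ (n : ℝ)]

theorem stmt13 (s : ℕ → ℕ) (hs : ∀ k, 1 ≤ k → 0 < s k) (hs1 : s 1 = 1)
    (W : ℕ → ℝ) (hW : ∀ k, 0 < W k) (hWlim : Tendsto W atTop atTop)
    (c₁ c₂ : ℝ) (hc₁ : 0 < c₁) (hc₁₂ : c₁ ≤ c₂)
    (hWrec : ∀ k, 1 ≤ k →
      c₁ ^ s (k + 1) * W k ^ s (k + 1) * W (k - 1) ≤ W (k + 1) ∧
      W (k + 1) ≤ c₂ ^ s (k + 1) * W k ^ s (k + 1) * W (k - 1))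
    (D : ℕ → ℝ) (hD : ∀ k, 1 ≤ D k)
    (hDrec : ∀ k, 1 ≤ k → D (k + 1) = D k ^ s (k + 1) * D (k - 1))
    (α β : ℝ) (hα : 0 ≤ α) (hβ : 0 ≤ β)
    (h0 : (c₂ * W 0) ^ α ≤ D 0 ∧ D 0 ≤ (c₁ * W 0) ^ β)
    (h1 : (c₂ * W 1) ^ α ≤ D 1 ∧ D 1 ≤ (c₁ * W 1) ^ β) :
    (∀ k, (c₂ * W k) ^ α ≤ D k ∧ D k ≤ (c₁ * W k) ^ β) ∧
    ∀ δ : ℝ, (∃ C : ℝ, 0 < C ∧ ∀ k, C⁻¹ * W k ^ δ ≤ D k ∧ D k ≤ C * W k ^ δ) →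
      α ≤ δ ∧ δ ≤ β := by
  have hc₂ : 0 < c₂ := lt_of_lt_of_le hc₁ hc₁₂
  have main : ∀ k, ((c₂ * W k) ^ α ≤ D k ∧ D k ≤ (c₁ * W k) ^ β) ∧
      ((c₂ * W (k + 1)) ^ α ≤ D (k + 1) ∧ D (k + 1) ≤ (c₁ * W (k + 1)) ^ β) := by
    intro k
    induction k with
    | zero => exact ⟨h0, h1⟩
    | succ k ih =>
      refine ⟨ih.2, ?_, ?_⟩
      · have hrec := hDrec (k + 1) (by omega)
        have hwrec := hWrec (k + 1) (by omega)
        simp only [Nat.add_sub_cancel] at hrec hwrec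
        calc (c₂ * W (k + 1 + 1)) ^ α
            ≤ (c₂ * (c₂ ^ s (k + 1 + 1) * W (k + 1) ^ s (k + 1 + 1) * W k)) ^ α := by
              apply Real.rpow_le_rpow (mul_pos hc₂ (hW _)).le _ hα
              exact mul_le_mul_of_nonneg_left hwrec.2 hc₂.le
          _ = ((c₂ * W (k + 1)) ^ α) ^ s (k + 1 + 1) * (c₂ * W k) ^ α :=
              key_alg _ _ _ hc₂.le (hW _).le (hW _).le _ _
          _ ≤ D (k + 1) ^ s (k + 1 + 1) * D k := by
              apply mul_le_mul _ ih.1.1 (Real.rpow_nonneg (mul_pos hc₂ (hW _)).le α)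
                (pow_nonneg (by linarith [hD (k + 1)]) _)
              exact pow_le_pow_left₀ (Real.rpow_nonneg (mul_pos hc₂ (hW _)).le α) ih.2.1 _
          _ = D (k + 1 + 1) := hrec.symm
      · have hrec := hDrec (k + 1) (by omega)
        have hwrec := hWrec (k + 1) (by omega)
        simp only [Nat.add_sub_cancel] at hrec hwrec
        calc D (k + 1 + 1) = D (k + 1) ^ s (k + 1 + 1) * D k := hrec
          _ ≤ ((c₁ * W (k + 1)) ^ β) ^ s (k + 1 + 1) * (c₁ * W k) ^ β := by
              apply mul_le_mul _ ih.1.2 (le_trans zero_le_one (hD k))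
                (pow_nonneg (Real.rpow_nonneg (mul_pos hc₁ (hW _)).le β) _)
              exact pow_le_pow_left₀ (le_trans zero_le_one (hD _)) ih.2.2 _
          _ = (c₁ * (c₁ ^ s (k + 1 + 1) * W (k + 1) ^ s (k + 1 + 1) * W k)) ^ β :=
              (key_alg _ _ _ hc₁.le (hW _).le (hW _).le _ _).symm
          _ ≤ (c₁ * W (k + 1 + 1)) ^ β := by
              apply Real.rpow_le_rpow (mul_pos hc₁ (mul_pos (mul_pos (pow_pos hc₁ _) (pow_pos (hW _) _)) (hW _))).le _ hβ
              exact mul_le_mul_of_nonneg_left hwrec.1 hc₁.le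
  refine ⟨fun k => (main k).1, ?_⟩
  rintro δ ⟨C, hC, hCk⟩
  constructor
  · by_contra hcon
    push_neg at hcon
    have hpos : 0 < α - δ := by linarith
    have hbnd : ∀ k, W k ^ (α - δ) ≤ C / c₂ ^ α := by
      intro k
      have h1 : c₂ ^ α * W k ^ α ≤ C * W k ^ δ := by
        calc c₂ ^ α * W k ^ α = (c₂ * W k) ^ α :=
              (Real.mul_rpow hc₂.le (hW k).le).symm
          _ ≤ D k := (main k).1.1
          _ ≤ C * W k ^ δ := (hCk k).2
      have h2 : W k ^ (α - δ) = W k ^ α / W k ^ δ := Real.rpow_sub (hW k) α δ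
      have hδpos : (0:ℝ) < W k ^ δ := Real.rpow_pos_of_pos (hW k) δ
      have hc₂α : (0:ℝ) < c₂ ^ α := Real.rpow_pos_of_pos hc₂ α
      rw [h2, div_le_div_iff₀ hδpos hc₂α]
      nlinarith [h1, hδpos, hc₂α]
    have htend : Tendsto (fun k => W k ^ (α - δ)) atTop atTop :=
      (tendsto_rpow_atTop hpos).comp hWlim
    obtain ⟨k, hk⟩ := (htend.eventually_gt_atTop (C / c₂ ^ α)).exists
    exact absurd (hbnd k) (not_le.mpr hk)
  · by_contra hcon
    push_neg at hcon
    have hpos : 0 < δ - β := by linarith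
    have hbnd : ∀ k, W k ^ (δ - β) ≤ C * c₁ ^ β := by
      intro k
      have h1 : C⁻¹ * W k ^ δ ≤ c₁ ^ β * W k ^ β := by
        calc C⁻¹ * W k ^ δ ≤ D k := (hCk k).1
          _ ≤ (c₁ * W k) ^ β := (main k).1.2
          _ = c₁ ^ β * W k ^ β := Real.mul_rpow hc₁.le (hW k).le
      have h2 : W k ^ (δ - β) = W k ^ δ / W k ^ β := Real.rpow_sub (hW k) δ β
      have hβpos : (0:ℝ) < W k ^ β := Real.rpow_pos_of_pos (hW k) β
      have hc₁β : (0:ℝ) < c₁ ^ β := Real.rpow_pos_of_pos hc₁ β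
      rw [h2, div_le_iff₀ hβpos]
      have := mul_le_mul_of_nonneg_left h1 hC.le
      rw [mul_inv_cancel_left₀ (ne_of_gt hC)] at this
      nlinarith [this, hβpos, hc₁β]
    have htend : Tendsto (fun k => W k ^ (δ - β)) atTop atTop :=
      (tendsto_rpow_atTop hpos).comp hWlim
    obtain ⟨k, hk⟩ := (htend.eventually_gt_atTop (C * c₁ ^ β)).exists
    exact absurd (hbnd k) (not_le.mpr hk)
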